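/- Let G be a transitive permutation group that acts as automorphisms of a (nontrivial, G-invariant) graph Γ with clique number ω ≥ 3 and independence number α ≥ 3. If G has the k-et property with k ≥ 5, then k ≥ ω + α - 1. -/

import Mathlib

open Finset

variable {Ω : Type*} [Fintype Ω] [DecidableEq Ω]

/-- `P` is a partition of the finite set `Ω`. -/
def IsPartition (P : Finset (Finset Ω)) : Prop :=
  (∀ p ∈ P, p.Nonempty) ∧
  (∀ p ∈ P, ∀ q ∈ P, p ≠ q → Disjoint p q) ∧
  (∀ x : Ω, ∃ p ∈ P, x ∈ p)

/-- `S` is a transversal of the partition `P`. -/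
def IsTransversal (S : Finset Ω) (P : Finset (Finset Ω)) : Prop :=
  ∀ p ∈ P, (S ∩ p).card = 1

/-- The `k`-set `S` witnesses the `k`-existential transversal property for `G`. -/
def Witnesses (G : Subgroup (Equiv.Perm Ω)) (k : ℕ) (S : Finset Ω) : Prop :=
  S.card = k ∧ ∀ P : Finset (Finset Ω), IsPartition P → P.card = k →
    ∃ g ∈ G, IsTransversal (S.image ⇑g) P

lemma exists_partition_singletons (C : Finset Ω) (k : ℕ)
    (hCk : C.card < k) (hΩ : k ≤ Fintype.card Ω) :
    ∃ P : Finset (Finset Ω), IsPartition P ∧ P.card = k ∧ ∀ c ∈ C, ({c} : Finset Ω) ∈ P := by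
  set l := C.card with hl
  set R : Finset Ω := Finset.univ \ C with hR
  have hRcard : R.card = Fintype.card Ω - l := by
    simp [hR, card_sdiff_of_subset (subset_univ C), Finset.card_univ, hl]
  obtain ⟨T, hTR, hTcard⟩ := Finset.exists_subset_card_eq (s := R) (n := k - l - 1) (by omega)
  have hCTdisj : Disjoint C T := by
    refine Finset.disjoint_left.mpr fun x hxC hxT => ?_
    have := hTR hxT
    simp [hR] at this
    exact this hxC
  have hCTcard : (C ∪ T).card = k - 1 := by
    rw [card_union_of_disjoint hCTdisj, hTcard]; omega
  have hbig : (R \ T).Nonempty := by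
    rw [← Finset.card_pos, card_sdiff_of_subset hTR, hRcard, hTcard]; omega
  have hnotmem : ∀ x ∈ C ∪ T, x ∉ R \ T := by
    intro x hx hx'
    rcases Finset.mem_union.mp hx with h | h
    · have := (Finset.mem_sdiff.mp hx').1
      simp [hR] at this; exact this h
    · exact (Finset.mem_sdiff.mp hx').2 h
  refine ⟨(C ∪ T).image (fun x => ({x} : Finset Ω)) ∪ {R \ T}, ⟨?_, ?_, ?_⟩, ?_, ?_⟩
  · intro p hp
    rcases Finset.mem_union.mp hp with h | h
    · obtain ⟨x, _, rfl⟩ := Finset.mem_image.mp h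
      exact ⟨x, Finset.mem_singleton_self x⟩
    · rw [Finset.mem_singleton.mp h]; exact hbig
  · intro p hp q hq hpq
    rcases Finset.mem_union.mp hp with h | h <;> rcases Finset.mem_union.mp hq with h' | h'
    · obtain ⟨x, _, rfl⟩ := Finset.mem_image.mp h
      obtain ⟨y, _, rfl⟩ := Finset.mem_image.mp h'
      simp only [Finset.disjoint_singleton_left, Finset.mem_singleton]
      intro hxy; exact hpq (by rw [hxy])
    · obtain ⟨x, hx, rfl⟩ := Finset.mem_image.mp h
      rw [Finset.mem_singleton.mp h']
      simp [Finset.disjoint_singleton_left, hnotmem x hx]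
    · obtain ⟨y, hy, rfl⟩ := Finset.mem_image.mp h'
      rw [Finset.mem_singleton.mp h]
      simp [Finset.disjoint_singleton_right, hnotmem y hy]
    · exact absurd (Finset.mem_singleton.mp h ▸ Finset.mem_singleton.mp h' ▸ rfl) hpq
  · intro x
    by_cases hx : x ∈ C ∪ T
    · exact ⟨{x}, Finset.mem_union_left _ (Finset.mem_image_of_mem _ hx), Finset.mem_singleton_self x⟩
    · refine ⟨R \ T, Finset.mem_union_right _ (Finset.mem_singleton_self _), ?_⟩
      rw [Finset.mem_union, not_or] at hx
      simp [hR, hx.1, hx.2]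
  · rw [Finset.card_union_of_disjoint, Finset.card_image_of_injective _ (fun a b => by simp),
      hCTcard, Finset.card_singleton]
    · omega
    · rw [Finset.disjoint_singleton_right]
      intro hmem
      obtain ⟨x, hx, hxeq⟩ := Finset.mem_image.mp hmem
      obtain ⟨y, hy⟩ := hbig
      have : y ∈ ({x} : Finset Ω) := hxeq ▸ hy
      rw [Finset.mem_singleton] at this
      exact hnotmem x hx (this ▸ hy)
  · intro c hc
    exact Finset.mem_union_left _ (Finset.mem_image_of_mem _ (Finset.mem_union_left _ hc))

/-- Key step: the witness set `S` must contain a preimage of any small set `C`. -/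
lemma witness_contains_preimage (G : Subgroup (Equiv.Perm Ω)) (k : ℕ) (S : Finset Ω)
    (hS : Witnesses G k S) (C : Finset Ω) (hCk : C.card < k) (hΩ : k ≤ Fintype.card Ω) :
    ∃ g ∈ G, C.image ⇑(g : Equiv.Perm Ω)⁻¹ ⊆ S := by
  obtain ⟨P, hP, hPk, hsing⟩ := exists_partition_singletons C k hCk hΩ
  obtain ⟨g, hgG, hT⟩ := hS.2 P hP hPk
  refine ⟨g, hgG, fun y hy => ?_⟩
  obtain ⟨c, hc, rfl⟩ := Finset.mem_image.mp hy
  have h1 : ((S.image ⇑g) ∩ {c}).card = 1 := hT {c} (hsing c hc)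
  have : c ∈ S.image ⇑g := by
    have hne : ((S.image ⇑g) ∩ {c}).Nonempty := by rw [← Finset.card_pos, h1]; omega
    obtain ⟨x, hx⟩ := hne
    rw [Finset.mem_inter, Finset.mem_singleton] at hx
    exact hx.2 ▸ hx.1
  obtain ⟨x, hx, hxc⟩ := Finset.mem_image.mp this
  have : (g : Equiv.Perm Ω)⁻¹ c = x := by
    rw [← hxc]; simp
  rw [this]; exact hx

/-- If the transitive group `G` acts as automorphisms of a graph `Γ` with clique
number `ω ≥ 3` and independence number `α ≥ 3`, and `G` has the `k`-et property
with `k ≥ 5`, then `k ≥ ω + α - 1`. -/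
theorem kET_clique_coclique_bound (G : Subgroup (Equiv.Perm Ω))
    (htrans : ∀ a b : Ω, ∃ g ∈ G, g a = b)
    (Γ : SimpleGraph Ω)
    (hinv : ∀ g ∈ G, ∀ x y : Ω, Γ.Adj (g x) (g y) ↔ Γ.Adj x y)
    (ω α k : ℕ) (hω : 3 ≤ ω) (hα : 3 ≤ α)
    (hclique : ∃ C : Finset Ω, C.card = ω ∧
      ∀ x ∈ C, ∀ y ∈ C, x ≠ y → Γ.Adj x y)
    (hcliquemax : ∀ C : Finset Ω, (∀ x ∈ C, ∀ y ∈ C, x ≠ y → Γ.Adj x y) →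
      C.card ≤ ω)
    (hindep : ∃ C : Finset Ω, C.card = α ∧
      ∀ x ∈ C, ∀ y ∈ C, x ≠ y → ¬ Γ.Adj x y)
    (hindepmax : ∀ C : Finset Ω, (∀ x ∈ C, ∀ y ∈ C, x ≠ y → ¬ Γ.Adj x y) →
      C.card ≤ α)
    (hk : 5 ≤ k)
    (het : ∃ S : Finset Ω, Witnesses G k S) :
    ω + α - 1 ≤ k := by
  by_contra hcon
  push_neg at hcon
  -- so ω + α ≥ k + 2
  have hsum : k + 2 ≤ ω + α := by omega
  obtain ⟨S, hS⟩ := het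
  obtain ⟨Cω, hCωcard, hCωcl⟩ := hclique
  obtain ⟨Dα, hDαcard, hDαind⟩ := hindep
  -- choose l and m
  set l := min ω (k - 1) with hldef
  set m := k + 2 - l with hmdef
  have hl3 : 3 ≤ l := by omega
  have hlk : l ≤ k - 1 := by omega
  have hlω : l ≤ ω := by omega
  have hm3 : 3 ≤ m := by omega
  have hmk : m ≤ k - 1 := by omega
  have hmα : m ≤ α := by omega
  -- l-clique and m-coclique
  obtain ⟨C, hCsub, hCcard⟩ := Finset.exists_subset_card_eq (s := Cω) (n := l) (by omega)
  obtain ⟨D, hDsub, hDcard⟩ := Finset.exists_subset_card_eq (s := Dα) (n := m) (by omega)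
  have hCcl : ∀ x ∈ C, ∀ y ∈ C, x ≠ y → Γ.Adj x y :=
    fun x hx y hy => hCωcl x (hCsub hx) y (hCsub hy)
  have hDind : ∀ x ∈ D, ∀ y ∈ D, x ≠ y → ¬ Γ.Adj x y :=
    fun x hx y hy => hDαind x (hDsub hx) y (hDsub hy)
  -- |Ω| ≥ k + 1
  have hinter : ∀ (A B : Finset Ω), (∀ x ∈ A, ∀ y ∈ A, x ≠ y → Γ.Adj x y) →
      (∀ x ∈ B, ∀ y ∈ B, x ≠ y → ¬ Γ.Adj x y) → (A ∩ B).card ≤ 1 := by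
    intro A B hA hB
    by_contra h
    push_neg at h
    obtain ⟨a, ha, b, hb, hab⟩ := Finset.one_lt_card.mp h
    rw [Finset.mem_inter] at ha hb
    exact hB a ha.2 b hb.2 hab (hA a ha.1 b hb.1 hab)
  have hΩcard : k + 1 ≤ Fintype.card Ω := by
    have h1 := hinter Cω Dα hCωcl hDαind
    have h2 : (Cω ∪ Dα).card ≤ Fintype.card Ω := by
      rw [← Finset.card_univ]; exact Finset.card_le_card (Finset.subset_univ _)
    have h3 := Finset.card_union_add_card_inter Cω Dα
    omega
  -- apply key step to C and D
  obtain ⟨g1, hg1G, hg1⟩ := witness_contains_preimage G k S hS C (by omega) (by omega)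
  obtain ⟨g2, hg2G, hg2⟩ := witness_contains_preimage G k S hS D (by omega) (by omega)
  set C' := C.image ⇑(g1 : Equiv.Perm Ω)⁻¹ with hC'
  set D' := D.image ⇑(g2 : Equiv.Perm Ω)⁻¹ with hD'
  have hC'card : C'.card = l := by
    rw [hC', Finset.card_image_of_injective _ (Equiv.injective _), hCcard]
  have hD'card : D'.card = m := by
    rw [hD', Finset.card_image_of_injective _ (Equiv.injective _), hDcard]
  have hC'cl : ∀ x ∈ C', ∀ y ∈ C', x ≠ y → Γ.Adj x y := by
    intro x hx y hy hxy
    obtain ⟨a, ha, rfl⟩ := Finset.mem_image.mp hx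
    obtain ⟨b, hb, rfl⟩ := Finset.mem_image.mp hy
    rw [hinv _ (inv_mem hg1G)]
    exact hCcl a ha b hb (fun h => hxy (by rw [h]))
  have hD'ind : ∀ x ∈ D', ∀ y ∈ D', x ≠ y → ¬ Γ.Adj x y := by
    intro x hx y hy hxy
    obtain ⟨a, ha, rfl⟩ := Finset.mem_image.mp hx
    obtain ⟨b, hb, rfl⟩ := Finset.mem_image.mp hy
    rw [hinv _ (inv_mem hg2G)]
    exact hDind a ha b hb (fun h => hxy (by rw [h]))
  have hintCD := hinter C' D' hC'cl hD'ind
  have hunion : (C' ∪ D').card ≤ k := by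
    rw [← hS.1]
    exact Finset.card_le_card (Finset.union_subset hg1 hg2)
  have := Finset.card_union_add_card_inter C' D'
  omega
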